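/- Let t = ⌈N/2⌉. Any randomized decision tree (querying only single input bits) that computes MAJORITY on N bits with two-sided error at most 1/4 must have cost N; equivalently, if such a tree always queries at most N-1 bits, then there is an input distribution on which its error probability exceeds 1/4. Specifically, under the distribution that with probability t/(N+1) picks a uniformly random string with exactly t-1 ones and otherwise picks a uniformly random string with exactly t ones, any algorithm that queries exactly N-1 bits errs with probability at least t(N - t + 1)/(N(N+1)) > 1/4. -/

import Mathlib

/-- A classical decision tree querying single input bits. -/
inductive DTree (N : ℕ) where
  | leaf (b : Bool)
  | node (i : Fin N) (t0 t1 : DTree N)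

/-- Evaluation of a decision tree on an input. -/
def DTree.eval {N : ℕ} : DTree N → (Fin N → Bool) → Bool
  | .leaf b, _ => b
  | .node i t0 t1, X => if X i then t1.eval X else t0.eval X

/-- Cost (worst-case number of queries = depth) of a decision tree. -/
def DTree.cost {N : ℕ} : DTree N → ℕ
  | .leaf _ => 0
  | .node _ t0 t1 => 1 + max t0.cost t1.cost

open Finset

lemma count_agree {N : ℕ} (S : Finset (Fin N)) (σ : Fin N → Bool) (a : ℕ) :
    ((univ : Finset (Fin N → Bool)).filter fun X =>
      (∀ j ∉ S, X j = σ j) ∧ (S.filter fun j => X j = true).card = a).card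
    = S.card.choose a := by
  rw [← Finset.card_powersetCard a S]
  apply Finset.card_bij' (i := fun X _ => S.filter fun j => X j = true)
    (j := fun A _ => fun j => if j ∈ S then decide (j ∈ A) else σ j)
  · intro X hX
    simp only [mem_filter, mem_univ, true_and] at hX
    simp [mem_powersetCard, hX.2, filter_subset]
  · intro A hA
    simp only [mem_powersetCard] at hA
    simp only [mem_filter, mem_univ, true_and]
    constructor
    · intro j hj; simp [hj]
    · have h : (S.filter fun j => (if j ∈ S then decide (j ∈ A) else σ j) = true) = A := by
        ext j; simp only [mem_filter]; constructor
        · rintro ⟨hjS, h⟩; simpa [hjS] using h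
        · intro hjA; exact ⟨hA.1 hjA, by simp [hA.1 hjA, hjA]⟩
      rw [h, hA.2]
  · intro X hX
    simp only [mem_filter, mem_univ, true_and] at hX
    funext j
    by_cases hj : j ∈ S
    · simp [hj]
    · simp [hj, hX.1 j hj]
  · intro A hA
    simp only [mem_powersetCard] at hA
    ext j; simp only [mem_filter]
    constructor
    · rintro ⟨hjS, h⟩; simpa [hjS] using h
    · intro hjA; exact ⟨hA.1 hjA, by simp [hA.1 hjA, hjA]⟩

lemma sub_help {N : ℕ} (S : Finset (Fin N)) (i : Fin N) (hi : i ∈ S) (σ : Fin N → Bool)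
    (b : Bool) (t0 t1 : DTree N) (w : ℕ) (v : Bool) :
    ((univ : Finset (Fin N → Bool)).filter fun X =>
      (∀ j ∉ S.erase i, X j = (Function.update σ i b) j) ∧
        ((S.erase i).filter fun j => X j = true).card = w ∧ (if b then t1 else t0).eval X = v)
    ⊆ (univ.filter fun X =>
      (∀ j ∉ S, X j = σ j) ∧ (S.filter fun j => X j = true).card = (if b then w + 1 else w) ∧
        (DTree.node i t0 t1).eval X = v) := by
  intro X hX
  simp only [mem_filter, mem_univ, true_and] at hX ⊢
  obtain ⟨h1, h2, h3⟩ := hX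
  have hXi : X i = b := by
    have := h1 i (Finset.notMem_erase i S)
    simpa using this
  refine ⟨?_, ?_, ?_⟩
  · intro j hj
    have hji : j ≠ i := fun h => hj (h ▸ hi)
    have := h1 j (fun h => hj (Finset.mem_of_mem_erase h))
    rwa [Function.update_of_ne hji] at this
  · rw [← Finset.insert_erase hi, Finset.filter_insert]
    cases b with
    | true =>
      rw [if_pos (by simp [hXi]), Finset.card_insert_of_notMem (by simp), h2]
      simp
    | false =>
      rw [if_neg (by simp [hXi]), h2]
      simp
  · simp only [DTree.eval, hXi]
    cases b with
    | true => simpa using h3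
    | false => simpa using h3
lemma card_two_subsets {α : Type*} [DecidableEq α] {A B C : Finset α} (hA : A ⊆ C) (hB : B ⊆ C)
    (h : Disjoint A B) : A.card + B.card ≤ C.card := by
  rw [← Finset.card_union_of_disjoint h]
  exact Finset.card_le_card (Finset.union_subset hA hB)


lemma sub_help_false {N : ℕ} (S : Finset (Fin N)) (i : Fin N) (hi : i ∈ S) (σ : Fin N → Bool)
    (t0 t1 : DTree N) (w : ℕ) (v : Bool) :
    ((univ : Finset (Fin N → Bool)).filter fun X =>
      (∀ j ∉ S.erase i, X j = (Function.update σ i false) j) ∧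
        ((S.erase i).filter fun j => X j = true).card = w ∧ t0.eval X = v)
    ⊆ (univ.filter fun X =>
      (∀ j ∉ S, X j = σ j) ∧ (S.filter fun j => X j = true).card = w ∧
        (DTree.node i t0 t1).eval X = v) := by
  have h := sub_help S i hi σ false t0 t1 w v
  simpa using h

lemma sub_help_true {N : ℕ} (S : Finset (Fin N)) (i : Fin N) (hi : i ∈ S) (σ : Fin N → Bool)
    (t0 t1 : DTree N) (w : ℕ) (v : Bool) :
    ((univ : Finset (Fin N → Bool)).filter fun X =>
      (∀ j ∉ S.erase i, X j = (Function.update σ i true) j) ∧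
        ((S.erase i).filter fun j => X j = true).card = w ∧ t1.eval X = v)
    ⊆ (univ.filter fun X =>
      (∀ j ∉ S, X j = σ j) ∧ (S.filter fun j => X j = true).card = w + 1 ∧
        (DTree.node i t0 t1).eval X = v) := by
  have h := sub_help S i hi σ true t0 t1 w v
  simpa using h

lemma arith0 {q0 q1 p0 p1 c : ℕ} (h0 : c ≤ q0 + q1) (h2 : q0 ≤ p0) (h3 : q1 ≤ p1) :
    c ≤ p0 + p1 := by omega

lemma arith1 {qa0 qa1 qb0 qb1 pa pb c0 c1 : ℕ} (h0 : c0 ≤ qa0 + qb0) (h1 : c1 ≤ qa1 + qb1)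
    (hA : qa0 + qa1 ≤ pa) (hB : qb0 + qb1 ≤ pb) : c1 + c0 ≤ pa + pb := by omega

lemma key_count {N : ℕ} (T : DTree N) : ∀ (S : Finset (Fin N)) (σ : Fin N → Bool) (a : ℕ),
    T.cost + 1 ≤ S.card →
    (S.card - 1).choose a ≤
      ((univ.filter fun X : Fin N → Bool =>
        (∀ j ∉ S, X j = σ j) ∧ (S.filter fun j => X j = true).card = a ∧ T.eval X = true).card
      + (univ.filter fun X : Fin N → Bool =>
        (∀ j ∉ S, X j = σ j) ∧ (S.filter fun j => X j = true).card = a + 1 ∧ T.eval X = false).card) := by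
  induction T with
  | leaf b =>
    intro S σ a hc
    simp only [DTree.cost] at hc
    obtain ⟨s, hs⟩ : ∃ s, S.card = s + 1 := ⟨S.card - 1, by omega⟩
    cases b with
    | true =>
      have h1 : (univ.filter fun X : Fin N → Bool =>
          (∀ j ∉ S, X j = σ j) ∧ (S.filter fun j => X j = true).card = a ∧
            (DTree.leaf true).eval X = true)
          = univ.filter fun X => (∀ j ∉ S, X j = σ j) ∧ (S.filter fun j => X j = true).card = a := by
        apply Finset.filter_congr; intro X _; simp [DTree.eval]
      rw [h1, count_agree]
      calc (S.card - 1).choose a ≤ S.card.choose a := Nat.choose_le_choose a (by omega)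
        _ ≤ _ := Nat.le_add_right _ _
    | false =>
      have h1 : (univ.filter fun X : Fin N → Bool =>
          (∀ j ∉ S, X j = σ j) ∧ (S.filter fun j => X j = true).card = a + 1 ∧
            (DTree.leaf false).eval X = false)
          = univ.filter fun X => (∀ j ∉ S, X j = σ j) ∧ (S.filter fun j => X j = true).card = a + 1 := by
        apply Finset.filter_congr; intro X _; simp [DTree.eval]
      rw [h1, count_agree]
      have h2 : (S.card - 1).choose a ≤ S.card.choose (a + 1) := by
        rw [hs]; simp only [Nat.add_sub_cancel]
        rw [Nat.choose_succ_succ]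
        exact Nat.le_add_right _ _
      exact le_trans h2 (Nat.le_add_left _ _)
  | node i t0 t1 ih0 ih1 =>
    intro S σ a hc
    simp only [DTree.cost] at hc
    by_cases hi : i ∈ S
    · have hcard : (S.erase i).card = S.card - 1 := Finset.card_erase_of_mem hi
      have hc0 : t0.cost + 1 ≤ (S.erase i).card := by
        have := le_max_left t0.cost t1.cost; omega
      have hc1 : t1.cost + 1 ≤ (S.erase i).card := by
        have := le_max_right t0.cost t1.cost; omega
      have hch0 : ((S.erase i).card - 1).choose 0 = (S.card - 1).choose 0 := by simp
      have hpas : ∀ a' : ℕ, (S.card - 1).choose (a' + 1)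
          = ((S.erase i).card - 1).choose a' + ((S.erase i).card - 1).choose (a' + 1) := by
        intro a'
        obtain ⟨s, hs⟩ : ∃ s, S.card = s + 2 := ⟨S.card - 2, by omega⟩
        rw [hcard, hs]
        have e1 : s + 2 - 1 = s + 1 := by omega
        have e2 : s + 1 - 1 = s := by omega
        rw [e1, e2, Nat.choose_succ_succ]
      have hdisj : ∀ (w0 w1 : ℕ) (v0 v1 : Bool) (u0 u1 : DTree N),
          Disjoint
          ((univ : Finset (Fin N → Bool)).filter fun X =>
            (∀ j ∉ S.erase i, X j = (Function.update σ i false) j) ∧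
              ((S.erase i).filter fun j => X j = true).card = w0 ∧ u0.eval X = v0)
          ((univ : Finset (Fin N → Bool)).filter fun X =>
            (∀ j ∉ S.erase i, X j = (Function.update σ i true) j) ∧
              ((S.erase i).filter fun j => X j = true).card = w1 ∧ u1.eval X = v1) := by
        intro w0 w1 v0 v1 u0 u1
        rw [Finset.disjoint_left]
        intro X hX hX'
        simp only [mem_filter, mem_univ, true_and] at hX hX'
        have e0 := hX.1 i (Finset.notMem_erase i S)
        have e1 := hX'.1 i (Finset.notMem_erase i S)
        simp at e0 e1
        rw [e0] at e1; exact Bool.false_ne_true e1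
      rcases a with _ | a'
      · have hsub0 := sub_help_false S i hi σ t0 t1 0 true
        have hsub1 := sub_help_false S i hi σ t0 t1 (0 + 1) false
        have h0 := ih0 (S.erase i) (Function.update σ i false) 0 hc0
        rw [hch0] at h0
        exact arith0 h0 (Finset.card_le_card hsub0) (Finset.card_le_card hsub1)
      · have hA0 := sub_help_false S i hi σ t0 t1 (a' + 1) true
        have hA1 := sub_help_true S i hi σ t0 t1 a' true
        have hB0 := sub_help_false S i hi σ t0 t1 (a' + 1 + 1) false
        have hB1 := sub_help_true S i hi σ t0 t1 (a' + 1) false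
        have hcardA := card_two_subsets hA0 hA1 (hdisj _ _ _ _ _ _)
        have hcardB := card_two_subsets hB0 hB1 (hdisj _ _ _ _ _ _)
        have h0 := ih0 (S.erase i) (Function.update σ i false) (a' + 1) hc0
        have h1 := ih1 (S.erase i) (Function.update σ i true) a' hc1
        rw [hpas a']
        exact arith1 h0 h1 hcardA hcardB
    · have hev : ∀ (v : Bool) (w : ℕ), (univ.filter fun X : Fin N → Bool =>
          (∀ j ∉ S, X j = σ j) ∧ (S.filter fun j => X j = true).card = w ∧
            (DTree.node i t0 t1).eval X = v)
          = univ.filter fun X =>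
          (∀ j ∉ S, X j = σ j) ∧ (S.filter fun j => X j = true).card = w ∧
            (if σ i then t1 else t0).eval X = v := by
        intro v w
        apply Finset.filter_congr
        intro X _
        constructor
        · rintro ⟨h1, h2, h3⟩
          refine ⟨h1, h2, ?_⟩
          have hXi := h1 i hi
          simp only [DTree.eval, hXi] at h3
          cases hσ : σ i <;> simp [hσ] at h3 ⊢ <;> exact h3
        · rintro ⟨h1, h2, h3⟩
          refine ⟨h1, h2, ?_⟩
          have hXi := h1 i hi
          simp only [DTree.eval, hXi]
          cases hσ : σ i <;> simp [hσ] at h3 ⊢ <;> exact h3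
      rw [hev, hev]
      cases hσ : σ i
      · simp only [if_neg (Bool.false_ne_true)]
        exact ih0 S σ a (by have := le_max_left t0.cost t1.cost; omega)
      · simp only [if_pos rfl]
        exact ih1 S σ a (by have := le_max_right t0.cost t1.cost; omega)

lemma four_choose (N : ℕ) (hN : 1 ≤ N) :
    Nat.choose (N + 1) ((N + 1) / 2) < 4 * Nat.choose (N - 1) ((N + 1) / 2 - 1) := by
  obtain ⟨t', hteq⟩ : ∃ t', (N + 1) / 2 = t' + 1 := ⟨(N + 1) / 2 - 1, by omega⟩
  rw [hteq]
  have ht2 : t' + 1 ≤ N := by omega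
  obtain ⟨n', hn'⟩ : ∃ n', N = n' + 1 := ⟨N - 1, by omega⟩
  -- identities
  have I1 : (N + 1) * N.choose t' = (N + 1).choose (t' + 1) * (t' + 1) := by
    simpa using Nat.add_one_mul_choose_eq N t'
  have I2 : N.choose (t' + 1) * (t' + 1) = N.choose t' * (N - t') := Nat.choose_succ_right_eq N t'
  have I3 : N * (N - 1).choose t' = N.choose (t' + 1) * (t' + 1) := by
    rw [hn']; simpa using Nat.add_one_mul_choose_eq n' t'
  have hpos : 0 < (N - 1).choose ((t' + 1) - 1) := Nat.choose_pos (by omega)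
  simp only [Nat.add_sub_cancel] at hpos ⊢
  -- main chain : C(N+1,t)*(t*(N+1-t)) = N*(N+1)*C(N-1,t-1)
  have chain : (N + 1).choose (t' + 1) * ((t' + 1) * (N - t')) = N * (N + 1) * (N - 1).choose t' := by
    calc (N + 1).choose (t' + 1) * ((t' + 1) * (N - t'))
        = ((N + 1).choose (t' + 1) * (t' + 1)) * (N - t') := by ring
      _ = ((N + 1) * N.choose t') * (N - t') := by rw [I1]
      _ = (N + 1) * (N.choose t' * (N - t')) := by ring
      _ = (N + 1) * (N.choose (t' + 1) * (t' + 1)) := by rw [I2]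
      _ = (N + 1) * (N * (N - 1).choose t') := by rw [I3]
      _ = N * (N + 1) * (N - 1).choose t' := by ring
  have hmul : N * (N + 1) < 4 * ((t' + 1) * (N - t')) := by
    have hcase : N = 2 * t' + 1 ∨ N = 2 * t' + 2 := by omega
    rcases hcase with h | h <;> subst h
    · have e : 2 * t' + 1 - t' = t' + 1 := by omega
      rw [e]; nlinarith
    · have e : 2 * t' + 2 - t' = t' + 2 := by omega
      rw [e]; nlinarith
  have key : (N + 1).choose (t' + 1) * ((t' + 1) * (N - t'))
      < 4 * (N - 1).choose t' * ((t' + 1) * (N - t')) := by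
    rw [chain]
    calc N * (N + 1) * (N - 1).choose t' < 4 * ((t' + 1) * (N - t')) * (N - 1).choose t' :=
          Nat.mul_lt_mul_of_lt_of_le hmul (le_refl _) hpos
      _ = 4 * (N - 1).choose t' * ((t' + 1) * (N - t')) := by ring
  exact lt_of_mul_lt_mul_right key (Nat.zero_le _)

lemma count_weight (N a : ℕ) :
    ((univ : Finset (Fin N → Bool)).filter fun X =>
      (univ.filter fun j => X j = true).card = a).card = N.choose a := by
  have h := count_agree (univ : Finset (Fin N)) (fun _ => false) a
  have he : ((univ : Finset (Fin N → Bool)).filter fun X =>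
      (∀ j ∉ (univ : Finset (Fin N)), X j = false) ∧ (univ.filter fun j => X j = true).card = a)
      = (univ : Finset (Fin N → Bool)).filter fun X =>
        (univ.filter fun j => X j = true).card = a := by
    apply Finset.filter_congr; intro X _
    simp
  rw [he] at h
  rw [h, Finset.card_univ, Fintype.card_fin]

/-- Any randomized decision tree (a probability distribution over
deterministic decision trees) computing MAJORITY on N bits with two-sided
error at most 1/4 on every input must have cost at least N: some tree in its
support has depth at least N. -/
theorem stmt_10 (N : ℕ) (𝒯 : PMF (DTree N))
    (herr : ∀ X : Fin N → Bool,
      𝒯.toOuterMeasure {T | T.eval X ≠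
        decide ((Finset.univ.filter fun i => X i = false).card ≤
                (Finset.univ.filter fun i => X i = true).card)} ≤ 1 / 4) :
    ∃ T ∈ 𝒯.support, N ≤ T.cost := by
  by_contra hcon
  push_neg at hcon
  obtain ⟨T₀, hT₀⟩ := 𝒯.support_nonempty
  rcases Nat.eq_zero_or_pos N with hN0 | hN
  · exact absurd (hcon T₀ hT₀) (by omega)
  have ht : 1 ≤ (N + 1) / 2 := by omega
  set t := (N + 1) / 2 with htdef
  -- number of false coordinates
  have hfc : ∀ X : Fin N → Bool,
      (univ.filter fun i => X i = false).card = N - (univ.filter fun i => X i = true).card := by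
    intro X
    have h := Finset.card_filter_add_card_filter_not
      (s := (univ : Finset (Fin N))) (p := fun i => X i = true)
    have he : ((univ : Finset (Fin N)).filter fun i => ¬ X i = true)
        = univ.filter fun i => X i = false := by
      apply Finset.filter_congr; intro i _; simp
    rw [he] at h
    have hcu : (univ : Finset (Fin N)).card = N := by simp
    omega
  -- majority values on the two weight levels
  have hmaj1 : ∀ X : Fin N → Bool, (univ.filter fun j => X j = true).card = t - 1 →
      decide ((Finset.univ.filter fun i => X i = false).card ≤
        (Finset.univ.filter fun i => X i = true).card) = false := by
    intro X hw
    rw [hfc X, hw]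
    apply decide_eq_false
    have hwle : t - 1 ≤ N := by omega
    omega
  have hmaj2 : ∀ X : Fin N → Bool, (univ.filter fun j => X j = true).card = t →
      decide ((Finset.univ.filter fun i => X i = false).card ≤
        (Finset.univ.filter fun i => X i = true).card) = true := by
    intro X hw
    rw [hfc X, hw]
    apply decide_eq_true
    omega
  -- hard distribution support
  obtain ⟨W, hWdef⟩ : ∃ W : Finset (Fin N → Bool), W = univ.filter fun X =>
      (univ.filter fun j => X j = true).card = t - 1 ∨
      (univ.filter fun j => X j = true).card = t := ⟨_, rfl⟩
  have hWcard : W.card = (N + 1).choose t := by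
    rw [hWdef, Finset.filter_or,
      Finset.card_union_of_disjoint (by
        rw [Finset.disjoint_left]
        intro X hX hX'
        simp only [mem_filter, mem_univ, true_and] at hX hX'
        omega),
      count_weight, count_weight]
    obtain ⟨t', ht'⟩ : ∃ t', t = t' + 1 := ⟨t - 1, by omega⟩
    rw [ht']
    simp only [Nat.add_sub_cancel]
    rw [Nat.choose_succ_succ]
  -- per-tree error count bound
  have hcount : ∀ T : DTree N, T ∈ 𝒯.support →
      (N - 1).choose (t - 1) ≤ (W.filter fun X => T.eval X ≠
        decide ((Finset.univ.filter fun i => X i = false).card ≤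
          (Finset.univ.filter fun i => X i = true).card)).card := by
    intro T hTs
    have hcost := hcon T hTs
    have hcu : (univ : Finset (Fin N)).card = N := by simp
    have htt : t - 1 + 1 = t := by omega
    have hkey := key_count T univ (fun _ => false) (t - 1) (by rw [hcu]; exact hcost)
    rw [hcu, htt] at hkey
    have hA : (univ.filter fun X : Fin N → Bool =>
        (∀ j ∉ (univ : Finset (Fin N)), X j = false) ∧
          (univ.filter fun j => X j = true).card = t - 1 ∧ T.eval X = true)
        = univ.filter fun X : Fin N → Bool =>
          (univ.filter fun j => X j = true).card = t - 1 ∧ T.eval X = true := by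
      apply Finset.filter_congr; intro X _; simp
    have hB : (univ.filter fun X : Fin N → Bool =>
        (∀ j ∉ (univ : Finset (Fin N)), X j = false) ∧
          (univ.filter fun j => X j = true).card = t ∧ T.eval X = false)
        = univ.filter fun X : Fin N → Bool =>
          (univ.filter fun j => X j = true).card = t ∧ T.eval X = false := by
      apply Finset.filter_congr; intro X _; simp
    rw [hA, hB] at hkey
    have hsubA : (univ.filter fun X : Fin N → Bool =>
        (univ.filter fun j => X j = true).card = t - 1 ∧ T.eval X = true)
        ⊆ W.filter fun X => T.eval X ≠
          decide ((Finset.univ.filter fun i => X i = false).card ≤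
            (Finset.univ.filter fun i => X i = true).card) := by
      intro X hX
      simp only [mem_filter, mem_univ, true_and] at hX ⊢
      refine ⟨by rw [hWdef]; simp [hX.1], ?_⟩
      rw [hmaj1 X hX.1, hX.2]
      simp
    have hsubB : (univ.filter fun X : Fin N → Bool =>
        (univ.filter fun j => X j = true).card = t ∧ T.eval X = false)
        ⊆ W.filter fun X => T.eval X ≠
          decide ((Finset.univ.filter fun i => X i = false).card ≤
            (Finset.univ.filter fun i => X i = true).card) := by
      intro X hX
      simp only [mem_filter, mem_univ, true_and] at hX ⊢
      refine ⟨by rw [hWdef]; simp [hX.1], ?_⟩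
      rw [hmaj2 X hX.1, hX.2]
      simp
    have hdisj : Disjoint (univ.filter fun X : Fin N → Bool =>
        (univ.filter fun j => X j = true).card = t - 1 ∧ T.eval X = true)
        (univ.filter fun X : Fin N → Bool =>
          (univ.filter fun j => X j = true).card = t ∧ T.eval X = false) := by
      rw [Finset.disjoint_left]
      intro X hX hX'
      simp only [mem_filter, mem_univ, true_and] at hX hX'
      have := hX.2; have := hX'.2
      simp_all
    exact le_trans hkey (card_two_subsets hsubA hsubB hdisj)
  -- upper bound from the error hypothesis
  have hup : ∑ X ∈ W, 𝒯.toOuterMeasure {T : DTree N | T.eval X ≠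
      decide ((Finset.univ.filter fun i => X i = false).card ≤
        (Finset.univ.filter fun i => X i = true).card)} ≤ W.card • (1/4 : ENNReal) :=
    Finset.sum_le_card_nsmul _ _ _ (fun X _ => herr X)
  -- lower bound from the counting lemma
  have hterm : ∀ T : DTree N, (((N - 1).choose (t - 1) : ℕ) : ENNReal) * 𝒯 T ≤
      ∑ X ∈ W, Set.indicator {T' : DTree N | T'.eval X ≠
        decide ((Finset.univ.filter fun i => X i = false).card ≤
          (Finset.univ.filter fun i => X i = true).card)} ⇑𝒯 T := by
    intro T
    by_cases h0 : 𝒯 T = 0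
    · rw [h0, mul_zero]; exact zero_le
    · have hTs : T ∈ 𝒯.support := by rwa [PMF.mem_support_iff]
      have hcnt := hcount T hTs
      calc (((N - 1).choose (t - 1) : ℕ) : ENNReal) * 𝒯 T
          ≤ (((W.filter fun X => T.eval X ≠
              decide ((Finset.univ.filter fun i => X i = false).card ≤
                (Finset.univ.filter fun i => X i = true).card)).card : ℕ) : ENNReal) * 𝒯 T :=
            mul_le_mul_left (by exact_mod_cast hcnt) _
        _ = ∑ X ∈ W.filter (fun X => T.eval X ≠
              decide ((Finset.univ.filter fun i => X i = false).card ≤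
                (Finset.univ.filter fun i => X i = true).card)), 𝒯 T := by
            rw [Finset.sum_const, nsmul_eq_mul]
        _ = ∑ X ∈ W, if T.eval X ≠
              decide ((Finset.univ.filter fun i => X i = false).card ≤
                (Finset.univ.filter fun i => X i = true).card) then 𝒯 T else 0 :=
            Finset.sum_filter _ _
        _ = _ := by
            apply Finset.sum_congr rfl
            intro X _
            rw [Set.indicator_apply]
            simp only [Set.mem_setOf_eq]
  have hlow : (((N - 1).choose (t - 1) : ℕ) : ENNReal) ≤
      ∑ X ∈ W, 𝒯.toOuterMeasure {T : DTree N | T.eval X ≠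
        decide ((Finset.univ.filter fun i => X i = false).card ≤
          (Finset.univ.filter fun i => X i = true).card)} := by
    calc (((N - 1).choose (t - 1) : ℕ) : ENNReal)
        = ∑' T : DTree N, (((N - 1).choose (t - 1) : ℕ) : ENNReal) * 𝒯 T := by
          rw [ENNReal.tsum_mul_left, PMF.tsum_coe, mul_one]
      _ ≤ ∑' T : DTree N, ∑ X ∈ W, Set.indicator {T' : DTree N | T'.eval X ≠
            decide ((Finset.univ.filter fun i => X i = false).card ≤
              (Finset.univ.filter fun i => X i = true).card)} ⇑𝒯 T :=
          ENNReal.tsum_le_tsum hterm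
      _ = ∑ X ∈ W, ∑' T : DTree N, Set.indicator {T' : DTree N | T'.eval X ≠
            decide ((Finset.univ.filter fun i => X i = false).card ≤
              (Finset.univ.filter fun i => X i = true).card)} ⇑𝒯 T :=
          Summable.tsum_finsetSum (fun i _ => ENNReal.summable)
      _ = _ := by
          apply Finset.sum_congr rfl
          intro X _
          exact (PMF.toOuterMeasure_apply 𝒯 _).symm
  -- combine
  have hcomb := hlow.trans hup
  rw [nsmul_eq_mul] at hcomb
  have h4 := mul_le_mul_left hcomb (4 : ENNReal)
  rw [mul_assoc] at h4
  have h14 : (1/4 : ENNReal) * 4 = 1 := by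
    rw [one_div, ENNReal.inv_mul_cancel] <;> norm_num
  rw [h14, mul_one] at h4
  have h5 : (N - 1).choose (t - 1) * 4 ≤ W.card := by exact_mod_cast h4
  have h6 := four_choose N hN
  rw [← htdef] at h6
  rw [hWcard] at h5
  omega
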